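/- Let G be a group containing elements σ₁, σ₄, δ, s, r satisfying: σ₁δ = δσ₁, σ₄δ = δσ₄, σ₁⁻¹rσ₁ = δ⁻¹rδ, σ₁⁻¹sσ₁ = s, σ₄⁻¹sσ₄ = δ⁻¹sδ, σ₄⁻¹rσ₄ = r. Then for all n ≥ 0, σ₁⁻ⁿσ₄⁻ⁿ(sr)ⁿσ₄ⁿσ₁ⁿ = δ⁻ⁿ(sr)ⁿδⁿ in G. -/
import Mathlib

private lemma conj_pow_aux {G : Type*} [Group G] (a d x : G)
    (hc : a * d = d * a) (h : a⁻¹ * x * a = d⁻¹ * x * d) :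
    ∀ n : ℕ, (a ^ n)⁻¹ * x * a ^ n = (d ^ n)⁻¹ * x * d ^ n := by
  intro n
  induction n with
  | zero => simp
  | succ n ih =>
    have hcd : Commute a (d ^ n) :=
      Commute.pow_right (show Commute a d from hc) n
    have h1 : a⁻¹ * (d ^ n)⁻¹ = (d ^ n)⁻¹ * a⁻¹ := by
      rw [← mul_inv_rev, ← mul_inv_rev, hcd.eq]
    have h2 : d ^ n * a = a * d ^ n := hcd.eq.symm
    calc (a ^ (n + 1))⁻¹ * x * a ^ (n + 1)
        = a⁻¹ * ((a ^ n)⁻¹ * x * a ^ n) * a := by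
          rw [pow_succ' a n]; group
      _ = a⁻¹ * ((d ^ n)⁻¹ * x * d ^ n) * a := by rw [ih]
      _ = (a⁻¹ * (d ^ n)⁻¹) * x * (d ^ n * a) := by group
      _ = ((d ^ n)⁻¹ * a⁻¹) * x * (a * d ^ n) := by rw [h1, h2]
      _ = (d ^ n)⁻¹ * (a⁻¹ * x * a) * d ^ n := by group
      _ = (d ^ n)⁻¹ * (d⁻¹ * x * d) * d ^ n := by rw [h]
      _ = (d ^ (n + 1))⁻¹ * x * d ^ (n + 1) := by
          rw [pow_succ' d n]; group

private lemma conj_pow_aux2 {G : Type*} [Group G] (g x : G) :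
    ∀ n : ℕ, (g⁻¹ * x * g) ^ n = g⁻¹ * x ^ n * g := by
  intro n
  induction n with
  | zero => simp
  | succ n ih => rw [pow_succ, ih, pow_succ]; group

theorem stmt_2 {G : Type*} [Group G] (σ₁ σ₄ δ s r : G)
    (h1 : σ₁ * δ = δ * σ₁) (h2 : σ₄ * δ = δ * σ₄)
    (h3 : σ₁⁻¹ * r * σ₁ = δ⁻¹ * r * δ) (h4 : σ₁⁻¹ * s * σ₁ = s)
    (h5 : σ₄⁻¹ * s * σ₄ = δ⁻¹ * s * δ) (h6 : σ₄⁻¹ * r * σ₄ = r) :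
    ∀ n : ℕ, (σ₁ ^ n)⁻¹ * (σ₄ ^ n)⁻¹ * (s * r) ^ n * σ₄ ^ n * σ₁ ^ n
      = (δ ^ n)⁻¹ * (s * r) ^ n * δ ^ n := by
  intro n
  have hs4 : (σ₄ ^ n)⁻¹ * s * σ₄ ^ n = (δ ^ n)⁻¹ * s * δ ^ n :=
    conj_pow_aux σ₄ δ s h2 h5 n
  have hr4 : (σ₄ ^ n)⁻¹ * r * σ₄ ^ n = r := by
    have := conj_pow_aux σ₄ 1 r (by group) (by simpa using h6) n
    simpa using this
  have hs1 : (σ₁ ^ n)⁻¹ * s * σ₁ ^ n = s := by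
    have := conj_pow_aux σ₁ 1 s (by group) (by simpa using h4) n
    simpa using this
  have hr1 : (σ₁ ^ n)⁻¹ * r * σ₁ ^ n = (δ ^ n)⁻¹ * r * δ ^ n :=
    conj_pow_aux σ₁ δ r h1 h3 n
  have hcd' : Commute (σ₁ ^ n) (δ ^ n) :=
    Commute.pow_pow (show Commute σ₁ δ from h1) n n
  have hδ : (σ₁ ^ n)⁻¹ * δ ^ n * σ₁ ^ n = δ ^ n := by
    rw [mul_assoc, ← hcd'.eq, ← mul_assoc, inv_mul_cancel, one_mul]
  have hδ' : (σ₁ ^ n)⁻¹ * (δ ^ n)⁻¹ * σ₁ ^ n = (δ ^ n)⁻¹ := by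
    rw [mul_assoc, ← hcd'.inv_right.eq, ← mul_assoc, inv_mul_cancel, one_mul]
  have key : (σ₁ ^ n)⁻¹ * ((σ₄ ^ n)⁻¹ * (s * r) * σ₄ ^ n) * σ₁ ^ n
      = (δ ^ n)⁻¹ * (s * r) * δ ^ n := by
    have step4 : (σ₄ ^ n)⁻¹ * (s * r) * σ₄ ^ n
        = ((σ₄ ^ n)⁻¹ * s * σ₄ ^ n) * ((σ₄ ^ n)⁻¹ * r * σ₄ ^ n) := by group
    rw [step4, hs4, hr4]
    calc (σ₁ ^ n)⁻¹ * ((δ ^ n)⁻¹ * s * δ ^ n * r) * σ₁ ^ n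
        = ((σ₁ ^ n)⁻¹ * (δ ^ n)⁻¹ * σ₁ ^ n) * ((σ₁ ^ n)⁻¹ * s * σ₁ ^ n) *
            ((σ₁ ^ n)⁻¹ * δ ^ n * σ₁ ^ n) * ((σ₁ ^ n)⁻¹ * r * σ₁ ^ n) := by
          group
      _ = (δ ^ n)⁻¹ * s * δ ^ n * ((δ ^ n)⁻¹ * r * δ ^ n) := by
          rw [hδ, hδ', hs1, hr1]
      _ = (δ ^ n)⁻¹ * (s * r) * δ ^ n := by group
  calc (σ₁ ^ n)⁻¹ * (σ₄ ^ n)⁻¹ * (s * r) ^ n * σ₄ ^ n * σ₁ ^ n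
      = (σ₁ ^ n)⁻¹ * ((σ₄ ^ n)⁻¹ * (s * r) ^ n * σ₄ ^ n) * σ₁ ^ n := by group
    _ = ((σ₁ ^ n)⁻¹ * ((σ₄ ^ n)⁻¹ * (s * r) * σ₄ ^ n) * σ₁ ^ n) ^ n := by
        rw [conj_pow_aux2, conj_pow_aux2]
    _ = ((δ ^ n)⁻¹ * (s * r) * δ ^ n) ^ n := by rw [key]
    _ = (δ ^ n)⁻¹ * (s * r) ^ n * δ ^ n := by rw [conj_pow_aux2]
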